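/- arXiv:0904.3349 — 2 statements merged into one kernel-verified Lean document; each statement's English description precedes it below -/
import Mathlib

section
/- In rank 4 with determinant bracket, the meet of a line and a plane satisfies: [a,c,d,e]·b − [b,c,d,e]·a = [d,e,a,b]·c − [c,e,a,b]·d + [c,d,a,b]·e, as vectors. -/
set_option maxHeartbeats 1000000 in
private lemma det4_aux {k : Type*} [CommRing k] (M : Matrix (Fin 4) (Fin 4) k) :
    M.det =
      M 0 0 * (M 1 1 * (M 2 2 * M 3 3 - M 2 3 * M 3 2)
              - M 1 2 * (M 2 1 * M 3 3 - M 2 3 * M 3 1)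
              + M 1 3 * (M 2 1 * M 3 2 - M 2 2 * M 3 1))
    - M 0 1 * (M 1 0 * (M 2 2 * M 3 3 - M 2 3 * M 3 2)
              - M 1 2 * (M 2 0 * M 3 3 - M 2 3 * M 3 0)
              + M 1 3 * (M 2 0 * M 3 2 - M 2 2 * M 3 0))
    + M 0 2 * (M 1 0 * (M 2 1 * M 3 3 - M 2 3 * M 3 1)
              - M 1 1 * (M 2 0 * M 3 3 - M 2 3 * M 3 0)
              + M 1 3 * (M 2 0 * M 3 1 - M 2 1 * M 3 0))
    - M 0 3 * (M 1 0 * (M 2 1 * M 3 2 - M 2 2 * M 3 1)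
              - M 1 1 * (M 2 0 * M 3 2 - M 2 2 * M 3 0)
              + M 1 2 * (M 2 0 * M 3 1 - M 2 1 * M 3 0)) := by
  rw [Matrix.det_succ_row_zero]
  simp [Fin.sum_univ_succ, Matrix.det_fin_three, Fin.succAbove]
  ring

set_option maxHeartbeats 4000000 in
theorem stmt_10 {k V : Type*} [Field k] [AddCommGroup V] [Module k V]
    (hdim : Module.finrank k V = 4) (ω : V [⋀^Fin 4]→ₗ[k] k) (hω : ω ≠ 0)
    (a b c d e : V) :
    ω ![a, c, d, e] • b - ω ![b, c, d, e] • a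
      = ω ![d, e, a, b] • c - ω ![c, e, a, b] • d + ω ![c, d, a, b] • e := by
  haveI : FiniteDimensional k V := FiniteDimensional.of_finrank_eq_succ hdim
  let B : Module.Basis (Fin 4) k V := Module.finBasisOfFinrankEq k V hdim
  have hrepr : ∀ x y z w : V, ω ![x, y, z, w] = ω B * B.det ![x, y, z, w] := by
    intro x y z w
    conv_lhs => rw [ω.eq_smul_basis_det B]
    rfl
  simp only [hrepr, mul_smul, ← smul_sub, ← smul_add]
  congr 1
  apply B.repr.injective
  ext i
  simp only [map_sub, map_add, map_smul, Finsupp.sub_apply, Finsupp.add_apply,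
    Finsupp.smul_apply, smul_eq_mul, Module.Basis.det_apply, det4_aux, Module.Basis.toMatrix_apply,
    Matrix.cons_val', Matrix.cons_val_zero, Matrix.cons_val_one, Matrix.head_cons,
    Matrix.cons_val_two, Matrix.tail_cons, Matrix.cons_val_three, Matrix.head_fin_const,
    Matrix.cons_val_fin_one, Matrix.empty_val']
  fin_cases i <;>
    simp only [show (⟨0, by omega⟩ : Fin 4) = 0 from rfl, show (⟨1, by omega⟩ : Fin 4) = 1 from rfl,
      show (⟨2, by omega⟩ : Fin 4) = 2 from rfl, show (⟨3, by omega⟩ : Fin 4) = 3 from rfl] <;>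
    ring
end

section
/- For points a, b, c, d of weight 1 in homogeneous coordinates for the plane (3-dimensional vector space, last coordinate 1), the wedge products satisfy a∧b = c∧d if and only if b − a = d − c and a, b, c, d have collinear affine parts lying on a common line (i.e., c − a is a scalar multiple of b − a), b ≠ a. -/
open ExteriorAlgebra

private lemma minor_eq {k : Type*} [Field k] (a b c d : Fin 3 → k)
    (h : ι k a * ι k b = ι k c * ι k d) (i j : Fin 3) :
    a i * b j - a j * b i = c i * d j - c j * d i := by
  classical
  set f : (Fin 3 → k) [⋀^Fin 2]→ₗ[k] k :=
    (Matrix.detRowAlternating).compLinearMap (LinearMap.funLeft k k ![i, j]) with hf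
  have hmul : ∀ x y : Fin 3 → k, ι k x * ι k y = ιMulti k 2 ![x, y] := by
    intro x y
    simp [ιMulti_apply, List.ofFn_succ]
  have h2 : ιMulti k 2 ![a, b] = ιMulti k 2 ![c, d] := by
    rw [← hmul, ← hmul, h]
  have := congrArg (liftAlternating (R := k) (M := Fin 3 → k) (N := k) (Pi.single 2 f)) h2
  rw [liftAlternating_apply_ιMulti, liftAlternating_apply_ιMulti, Pi.single_eq_same] at this
  have key : ∀ x y : Fin 3 → k, f ![x, y] = x i * y j - x j * y i := by
    intro x y
    have : f ![x, y] = Matrix.det (Matrix.of fun p q => (![x, y] p) (![i, j] q)) := rfl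
    rw [this, Matrix.det_fin_two]
    simp
  rw [key, key] at this
  exact this

theorem stmt_16 {k : Type*} [Field k]
    (a b c d : Fin 3 → k) (ha : a 2 = 1) (hb : b 2 = 1) (hc : c 2 = 1) (hd : d 2 = 1)
    (hab : a ≠ b) :
    ι k a * ι k b = ι k c * ι k d ↔
      (d - c = b - a ∧ ∃ s : k, c - a = s • (b - a)) := by
  constructor
  · intro h
    have h02 := minor_eq a b c d h 0 2
    have h12 := minor_eq a b c d h 1 2
    have h01 := minor_eq a b c d h 0 1
    rw [ha, hb, hc, hd] at h02 h12
    have e0 : d 0 - c 0 = b 0 - a 0 := by linear_combination h02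
    have e1 : d 1 - c 1 = b 1 - a 1 := by linear_combination h12
    have hdc : d - c = b - a := by
      funext p
      fin_cases p <;> simp [e0, e1, ha, hb, hc, hd]
    refine ⟨hdc, ?_⟩
    -- key collinearity relation
    have key : (c 0 - a 0) * (b 1 - a 1) = (c 1 - a 1) * (b 0 - a 0) := by
      linear_combination (-1 : k) * h01 + c 1 * e0 - c 0 * e1
    by_cases h0 : b 0 - a 0 ≠ 0
    · refine ⟨(c 0 - a 0) / (b 0 - a 0), ?_⟩
      funext p
      fin_cases p <;> simp [Pi.smul_apply, Pi.sub_apply, ha, hb, hc]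
      · field_simp
      · field_simp
        linear_combination -key
    · push_neg at h0
      have h1 : b 1 - a 1 ≠ 0 := by
        intro h1
        apply hab
        funext p
        fin_cases p
        · show a 0 = b 0; linear_combination -h0
        · show a 1 = b 1; linear_combination -h1
        · show a 2 = b 2; rw [ha, hb]
      refine ⟨(c 1 - a 1) / (b 1 - a 1), ?_⟩
      funext p
      fin_cases p
      · show c 0 - a 0 = (c 1 - a 1) / (b 1 - a 1) * (b 0 - a 0)
        rw [h0, mul_zero]
        have h2 : (c 0 - a 0) * (b 1 - a 1) = 0 := by
          linear_combination key + (c 1 - a 1) * h0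
        rcases mul_eq_zero.mp h2 with hh | hh
        · linear_combination hh
        · exact absurd hh h1
      · show c 1 - a 1 = (c 1 - a 1) / (b 1 - a 1) * (b 1 - a 1)
        field_simp
      · show c 2 - a 2 = (c 1 - a 1) / (b 1 - a 1) * (b 2 - a 2)
        rw [ha, hb, hc]
        ring
  · rintro ⟨hdc, s, hca⟩
    have hc' : c = a + s • (b - a) := by rw [← hca]; abel
    have hd' : d = a + s • (b - a) + (b - a) := by
      have : d = c + (b - a) := by rw [← hdc]; abel
      rw [this, hc']
    have hb' : (ι k b : ExteriorAlgebra k (Fin 3 → k)) = ι k a + ι k (b - a) := by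
      rw [← map_add]; congr 1; abel
    rw [hc', hd', hb']
    simp only [map_add, map_smul]
    have sq : ∀ x : Fin 3 → k, ι k x * ι k x = 0 := fun x => ι_sq_zero x
    have swap : ι k (b - a) * ι k a = - (ι k a * ι k (b - a)) :=
      eq_neg_of_add_eq_zero_left (ι_add_mul_swap (R := k) (b - a) a)
    simp only [mul_add, add_mul, smul_mul_assoc, mul_smul_comm, sq, swap, smul_neg,
      smul_zero, add_zero, zero_add, smul_smul]
    abel
end
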